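/- arXiv:1406.5777 — 3 statements merged into one kernel-verified Lean document; each statement's English description precedes it below -/
import Mathlib

section
/- Let U be unitary and A self-adjoint with U ∈ C^1(A), and suppose the strong limit D := s-lim_{N→∞} (1/N) Σ_{n=0}^{N−1} U^n([A,U]U^{-1})U^{-n} exists. Then D is a bounded self-adjoint operator that commutes with U^n for every integer n. -/
open scoped ComplexInnerProductSpace
open Filter

/-- Let `U` be unitary and `A` self-adjoint with `U ∈ C¹(A)` (bounded commutator
`B = [A,U]`), and suppose the strong limit
`D = s-lim (1/N) ∑_{n<N} U^n ([A,U]U⁻¹) U^{-n}` exists.  Then `D` is a bounded self-adjoint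
operator commuting with `U^n` for every integer `n`. -/
theorem stmt3 {𝓗 : Type*} [NormedAddCommGroup 𝓗] [InnerProductSpace ℂ 𝓗] [CompleteSpace 𝓗]
    (U : 𝓗 →L[ℂ] 𝓗) (hU : U ∈ unitary (𝓗 →L[ℂ] 𝓗))
    (A : 𝓗 →ₗ.[ℂ] 𝓗) (hA : IsSelfAdjoint A)
    (B : 𝓗 →L[ℂ] 𝓗)
    (hB : ∀ φ : A.domain, ⟪A φ, U (φ : 𝓗)⟫ - ⟪(φ : 𝓗), U (A φ)⟫ = ⟪(φ : 𝓗), B (φ : 𝓗)⟫)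
    (D : 𝓗 →L[ℂ] 𝓗)
    (hD : ∀ ψ : 𝓗, Tendsto
      (fun N : ℕ => ((N : ℂ)⁻¹ • ∑ n ∈ Finset.range N, U ^ n * (B * star U) * (star U) ^ n) ψ)
      atTop (nhds (D ψ))) :
    IsSelfAdjoint D ∧ ∀ n : ℤ,
      D * (((⟨U, hU⟩ : unitary (𝓗 →L[ℂ] 𝓗)) ^ n : unitary (𝓗 →L[ℂ] 𝓗)) : 𝓗 →L[ℂ] 𝓗) =
        (((⟨U, hU⟩ : unitary (𝓗 →L[ℂ] 𝓗)) ^ n : unitary (𝓗 →L[ℂ] 𝓗)) : 𝓗 →L[ℂ] 𝓗) * D := by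
  have hUsU : star U * U = 1 := (Unitary.mem_iff.mp hU).1
  have hUUs : U * star U = 1 := (Unitary.mem_iff.mp hU).2
  have hsUU : ∀ x : 𝓗, star U (U x) = x := by
    intro x
    have := congrArg (fun T : 𝓗 →L[ℂ] 𝓗 => T x) hUsU
    simpa using this
  have hUsU' : ∀ x : 𝓗, U (star U x) = x := by
    intro x
    have := congrArg (fun T : 𝓗 →L[ℂ] 𝓗 => T x) hUUs
    simpa using this
  have hUinner : ∀ x y : 𝓗, ⟪U x, U y⟫ = ⟪x, y⟫ :=
    U.inner_map_map_of_mem_unitary hU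
  -- dense domain and symmetry of A
  have hdense : Dense (A.domain : Set 𝓗) := hA.dense_domain
  have hAdj : A.adjoint = A := hA
  have hsymm : ∀ x y : A.domain, ⟪(A x : 𝓗), (y : 𝓗)⟫ = ⟪(x : 𝓗), A y⟫ := by
    have h := LinearPMap.adjoint_isFormalAdjoint (T := A) hdense
    rw [hAdj] at h
    exact h
  -- polarized commutator identity
  have key : ∀ φ ψ : A.domain,
      ⟪A φ, U (ψ : 𝓗)⟫ - ⟪(φ : 𝓗), U (A ψ)⟫ = ⟪(φ : 𝓗), B (ψ : 𝓗)⟫ := by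
    intro φ ψ
    set q : A.domain → A.domain → ℂ := fun x y =>
      ⟪A x, U (y : 𝓗)⟫ - ⟪(x : 𝓗), U (A y)⟫ - ⟪(x : 𝓗), B (y : 𝓗)⟫ with hqdef
    have hq0 : ∀ x, q x x = 0 := by
      intro x
      have := hB x
      simp only [hqdef]
      linear_combination this
    have hadd : ∀ x y : A.domain, q (x + y) (x + y) = q x x + q x y + q y x + q y y := by
      intro x y
      simp only [hqdef, A.map_add, Submodule.coe_add, map_add, inner_add_left, inner_add_right]
      ring
    have hIsmul : ∀ x y : A.domain,
        q (x + Complex.I • y) (x + Complex.I • y)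
          = Complex.I * q x y - Complex.I * q y x := by
      intro x y
      have h1 := hadd x (Complex.I • y)
      rw [h1, hq0 x]
      have e1 : q x (Complex.I • y) = Complex.I * q x y := by
        simp only [hqdef, A.map_smul, Submodule.coe_smul_of_tower, map_smul, inner_smul_left,
          inner_smul_right, smul_eq_mul]
        ring
      have e2 : q (Complex.I • y) x = (starRingEnd ℂ) Complex.I * q y x := by
        simp only [hqdef, A.map_smul, Submodule.coe_smul_of_tower, map_smul, inner_smul_left,
          inner_smul_right, smul_eq_mul]
        ring
      have e3 : q (Complex.I • y) (Complex.I • y) = 0 := hq0 _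
      rw [e1, e2, e3, Complex.conj_I]
      ring
    have h1 : q φ ψ + q ψ φ = 0 := by
      have := hq0 (φ + ψ)
      rw [hadd, hq0, hq0] at this
      linear_combination this
    have h2 : q φ ψ - q ψ φ = 0 := by
      have := hq0 (φ + Complex.I • ψ)
      rw [hIsmul] at this
      have h2' : Complex.I * (q φ ψ - q ψ φ) = 0 := by linear_combination this
      rcases mul_eq_zero.mp h2' with h | h
      · exact absurd h Complex.I_ne_zero
      · exact h
    have hqz : q φ ψ = 0 := by linear_combination h1 / 2 + h2 / 2
    simp only [hqdef] at hqz
    linear_combination hqz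
  -- U preserves the domain of A
  have hmem' : ∀ φ : A.domain, U (φ : 𝓗) ∈ A.adjoint.domain := by
    intro φ
    apply LinearPMap.mem_adjoint_domain_of_exists
    refine ⟨U (A φ) + B (φ : 𝓗), fun x => ?_⟩
    have k := congrArg (starRingEnd ℂ) (key x φ)
    simp only [map_sub, inner_conj_symm] at k
    rw [inner_add_left]
    linear_combination -k
  have hmem : ∀ φ : A.domain, U (φ : 𝓗) ∈ A.domain := by
    intro φ
    have := hmem' φ
    rwa [hAdj] at this
  have hval' : ∀ φ : A.domain,
      A.adjoint ⟨U (φ : 𝓗), hmem' φ⟩ = U (A φ) + B (φ : 𝓗) := by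
    intro φ
    refine LinearPMap.adjoint_apply_eq hdense _ fun x => ?_
    have k := congrArg (starRingEnd ℂ) (key x φ)
    simp only [map_sub, inner_conj_symm] at k
    rw [inner_add_left]
    linear_combination -k
  have hval : ∀ φ : A.domain,
      A ⟨U (φ : 𝓗), hmem φ⟩ = U (A φ) + B (φ : 𝓗) := by
    intro φ
    have h := (LinearPMap.ext_iff.mp hAdj).2 (x := U (φ : 𝓗)) (hf := hmem' φ)
      (hg := hmem φ)
    rw [← h]
    exact hval' φ
  -- the key symmetry relation
  have key2 : ∀ φ ψ : A.domain, ⟪B (φ : 𝓗), U (ψ : 𝓗)⟫ = ⟪U (φ : 𝓗), B (ψ : 𝓗)⟫ := by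
    intro φ ψ
    have h1 := hsymm ⟨U (φ : 𝓗), hmem φ⟩ ⟨U (ψ : 𝓗), hmem ψ⟩
    rw [hval φ, hval ψ] at h1
    simp only [Submodule.coe_mk] at h1
    rw [inner_add_left, inner_add_right] at h1
    have h2 := hUinner (A φ : 𝓗) (ψ : 𝓗)
    have h3 := hUinner (φ : 𝓗) (A ψ : 𝓗)
    have h4 := hsymm φ ψ
    linear_combination h1 - h2 + h3 - h4
  -- C := B * star U is self-adjoint
  have hBU : U * star B = B * star U := by
    set T : 𝓗 →L[ℂ] 𝓗 := U * star B - B * star U with hTdef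
    have hT0 : ∀ φ : A.domain, T (U (φ : 𝓗)) = 0 := by
      intro φ
      have hz : ∀ ψ : A.domain, ⟪U (ψ : 𝓗), T (U (φ : 𝓗))⟫ = 0 := by
        intro ψ
        simp only [hTdef, ContinuousLinearMap.sub_apply, ContinuousLinearMap.mul_apply,
          inner_sub_right]
        rw [hUinner, hsUU, ContinuousLinearMap.star_eq_adjoint,
          ContinuousLinearMap.adjoint_inner_right, key2 ψ φ]
        ring
      have hz' : ∀ z : 𝓗, ⟪z, T (U (φ : 𝓗))⟫ = 0 := by
        intro z
        have hcont : Continuous fun w : 𝓗 => ⟪U w, T (U (φ : 𝓗))⟫ :=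
          (U.continuous).inner continuous_const
        have heq : (fun w : 𝓗 => ⟪U w, T (U (φ : 𝓗))⟫) = fun _ => (0 : ℂ) :=
          Continuous.ext_on hdense hcont continuous_const fun w hw => hz ⟨w, hw⟩
        have := congrFun heq (star U z)
        simpa [hUsU'] using this
      exact inner_self_eq_zero.mp (hz' (T (U (φ : 𝓗))))
    have hTz : ∀ z : 𝓗, T z = 0 := by
      intro z
      have hcont : Continuous fun w : 𝓗 => T (U w) := T.continuous.comp U.continuous
      have heq : (fun w : 𝓗 => T (U w)) = fun _ => (0 : 𝓗) :=
        Continuous.ext_on hdense hcont continuous_const fun w hw => hT0 ⟨w, hw⟩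
      have := congrFun heq (star U z)
      simpa [hUsU'] using this
    have : T = 0 := by
      ext z
      simpa using hTz z
    rw [hTdef] at this
    have := sub_eq_zero.mp this
    exact this
  have hC : star (B * star U) = B * star U := by
    rw [star_mul, star_star]
    exact hBU
  -- each Birkhoff average is self-adjoint
  set S : ℕ → (𝓗 →L[ℂ] 𝓗) := fun N =>
    (N : ℂ)⁻¹ • ∑ n ∈ Finset.range N, U ^ n * (B * star U) * (star U) ^ n with hSdef
  have hterm : ∀ n : ℕ,
      star (U ^ n * (B * star U) * (star U) ^ n) = U ^ n * (B * star U) * (star U) ^ n := by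
    intro n
    rw [star_mul, star_mul, star_pow, star_pow, star_star, hC]
    simp only [mul_assoc]
  have hSstar : ∀ N, star (S N) = S N := by
    intro N
    rw [hSdef]
    simp only [star_smul, star_sum, hterm, star_inv₀, star_natCast]
  have hSsym : ∀ (N) (x y : 𝓗), ⟪S N x, y⟫ = ⟪x, S N y⟫ := by
    intro N x y
    conv_rhs => rw [← hSstar N]
    rw [ContinuousLinearMap.star_eq_adjoint, ContinuousLinearMap.adjoint_inner_right]
  constructor
  · -- self-adjointness of D
    rw [ContinuousLinearMap.isSelfAdjoint_iff_isSymmetric]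
    intro x y
    have l1 : Tendsto (fun N => ⟪S N x, y⟫) atTop (nhds ⟪D x, y⟫) :=
      (hD x).inner tendsto_const_nhds
    have l2 : Tendsto (fun N => ⟪x, S N y⟫) atTop (nhds ⟪x, D y⟫) :=
      tendsto_const_nhds.inner (hD y)
    have heq : (fun N => ⟪S N x, y⟫) = fun N => ⟪x, S N y⟫ :=
      funext fun N => hSsym N x y
    rw [heq] at l1
    exact tendsto_nhds_unique l1 l2
  · -- commutation with powers of U
    have hDU : D * U = U * D := by
      have hcomm : ∀ ψ : 𝓗, U (D (star U ψ)) = D ψ := by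
        intro ψ
        have limit1 : Tendsto (fun N => U (S N (star U ψ))) atTop (nhds (U (D (star U ψ)))) :=
          ((U.continuous.tendsto _).comp (hD (star U ψ)))
        -- algebraic identity for the shifted average
        have hop : ∀ N : ℕ, U * S N * star U
            = S N + (N : ℂ)⁻¹ • ((U ^ N * (B * star U) * (star U) ^ N)
                - (U ^ 0 * (B * star U) * (star U) ^ 0)) := by
          intro N
          have hf : ∀ n : ℕ, U * (U ^ n * (B * star U) * (star U) ^ n) * star U
              = U ^ (n + 1) * (B * star U) * (star U) ^ (n + 1) := by
            intro n
            rw [pow_succ' U n, pow_succ (star U) n]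
            simp only [mul_assoc]
          have hsum : ∑ n ∈ Finset.range N,
                U ^ (n + 1) * (B * star U) * (star U) ^ (n + 1)
              = (∑ n ∈ Finset.range N, U ^ n * (B * star U) * (star U) ^ n)
                + ((U ^ N * (B * star U) * (star U) ^ N)
                  - (U ^ 0 * (B * star U) * (star U) ^ 0)) := by
            have h := Finset.sum_range_succ'
              (fun n => U ^ n * (B * star U) * (star U) ^ n) N
            have h2 := Finset.sum_range_succ
              (fun n => U ^ n * (B * star U) * (star U) ^ n) N
            rw [h2] at h
            rw [← add_sub_assoc, h]
            simp
          calc U * S N * star U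
              = (N : ℂ)⁻¹ • ∑ n ∈ Finset.range N,
                  U * (U ^ n * (B * star U) * (star U) ^ n) * star U := by
                rw [hSdef]
                simp only [smul_mul_assoc, mul_smul_comm, Finset.mul_sum, Finset.sum_mul]
            _ = (N : ℂ)⁻¹ • ∑ n ∈ Finset.range N,
                  U ^ (n + 1) * (B * star U) * (star U) ^ (n + 1) := by
                simp only [hf]
            _ = S N + (N : ℂ)⁻¹ • ((U ^ N * (B * star U) * (star U) ^ N)
                - (U ^ 0 * (B * star U) * (star U) ^ 0)) := by
                rw [hsum, smul_add, hSdef]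
        have limit2 : Tendsto (fun N => U (S N (star U ψ))) atTop (nhds (D ψ)) := by
          have hfun : ∀ N : ℕ, U (S N (star U ψ))
              = S N ψ + (N : ℂ)⁻¹ • ((U ^ N * (B * star U) * (star U) ^ N) ψ
                  - (U ^ 0 * (B * star U) * (star U) ^ 0) ψ) := by
            intro N
            have := congrArg (fun T : 𝓗 →L[ℂ] 𝓗 => T ψ) (hop N)
            simpa [ContinuousLinearMap.mul_apply, ContinuousLinearMap.add_apply,
              ContinuousLinearMap.smul_apply, ContinuousLinearMap.sub_apply] using this
          have herr : Tendsto (fun N : ℕ =>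
              (N : ℂ)⁻¹ • ((U ^ N * (B * star U) * (star U) ^ N) ψ
                - (U ^ 0 * (B * star U) * (star U) ^ 0) ψ)) atTop (nhds 0) := by
            apply squeeze_zero_norm (a := fun N : ℕ => (N : ℝ)⁻¹ * (2 * (‖B * star U‖ * ‖ψ‖)))
            · intro N
              rw [norm_smul]
              have h1 : ‖((N : ℂ))⁻¹‖ = (N : ℝ)⁻¹ := by
                simp
              rw [h1]
              gcongr
              have hb : ∀ n : ℕ, ‖(U ^ n * (B * star U) * (star U) ^ n) ψ‖
                  ≤ ‖B * star U‖ * ‖ψ‖ := by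
                intro n
                have hUn : U ^ n ∈ unitary (𝓗 →L[ℂ] 𝓗) := pow_mem hU n
                have hsUn : (star U) ^ n ∈ unitary (𝓗 →L[ℂ] 𝓗) :=
                  pow_mem (Unitary.star_mem hU) n
                calc ‖(U ^ n * (B * star U) * (star U) ^ n) ψ‖
                    = ‖(B * star U) ((star U ^ n) ψ)‖ := by
                      rw [ContinuousLinearMap.mul_apply, ContinuousLinearMap.mul_apply]
                      exact (U ^ n).norm_map_of_mem_unitary hUn _
                  _ ≤ ‖B * star U‖ * ‖(star U ^ n) ψ‖ :=
                      (B * star U).le_opNorm _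
                  _ = ‖B * star U‖ * ‖ψ‖ := by
                      rw [(star U ^ n).norm_map_of_mem_unitary hsUn ψ]
              calc ‖(U ^ N * (B * star U) * (star U) ^ N) ψ
                    - (U ^ 0 * (B * star U) * (star U) ^ 0) ψ‖
                  ≤ ‖(U ^ N * (B * star U) * (star U) ^ N) ψ‖
                    + ‖(U ^ 0 * (B * star U) * (star U) ^ 0) ψ‖ := norm_sub_le _ _
                _ ≤ ‖B * star U‖ * ‖ψ‖ + ‖B * star U‖ * ‖ψ‖ := add_le_add (hb N) (hb 0)
                _ = 2 * (‖B * star U‖ * ‖ψ‖) := by ring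
            · have := tendsto_inv_atTop_nhds_zero_nat.mul_const
                (2 * (‖B * star U‖ * ‖ψ‖))
              simpa using this
          have := (hD ψ).add herr
          rw [add_zero] at this
          exact this.congr fun N => (hfun N).symm
        exact tendsto_nhds_unique limit1 limit2
      -- from hcomm: U * D * star U = D, hence D * U = U * D
      have hUDU : U * D * star U = D := by
        ext ψ
        simpa [ContinuousLinearMap.mul_apply] using hcomm ψ
      calc D * U = (U * D * star U) * U := by rw [hUDU]
        _ = U * D * (star U * U) := by simp only [mul_assoc]
        _ = U * D := by rw [hUsU, mul_one]
    have hDsU : D * star U = star U * D := by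
      calc D * star U = star U * (U * (D * star U)) := by
            rw [← mul_assoc, ← mul_assoc, hUsU, one_mul]
        _ = star U * ((D * U) * star U) := by
            congr 1
            rw [← mul_assoc, hDU]
        _ = star U * (D * (U * star U)) := by rw [mul_assoc]
        _ = star U * D := by rw [hUUs, mul_one]
    intro n
    induction n using Int.induction_on with
    | zero => rw [zpow_zero, OneMemClass.coe_one, mul_one, one_mul]
    | succ k ih =>
        have h1 : (⟨U, hU⟩ : unitary (𝓗 →L[ℂ] 𝓗)) ^ ((k : ℤ) + 1)
            = (⟨U, hU⟩ : unitary (𝓗 →L[ℂ] 𝓗)) ^ (k : ℤ) * ⟨U, hU⟩ := zpow_add_one _ _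
        rw [h1, MulMemClass.coe_mul]
        show D * (_ * U) = _
        rw [← mul_assoc, ih, mul_assoc, hDU, ← mul_assoc]
    | pred k ih =>
        have h1 : (⟨U, hU⟩ : unitary (𝓗 →L[ℂ] 𝓗)) ^ (-(k : ℤ) - 1)
            = (⟨U, hU⟩ : unitary (𝓗 →L[ℂ] 𝓗)) ^ (-(k : ℤ)) * (⟨U, hU⟩ : unitary (𝓗 →L[ℂ] 𝓗))⁻¹ :=
          zpow_sub_one _ _
        have h2 : (((⟨U, hU⟩ : unitary (𝓗 →L[ℂ] 𝓗))⁻¹ : unitary (𝓗 →L[ℂ] 𝓗)) : 𝓗 →L[ℂ] 𝓗)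
            = star U := rfl
        rw [h1, MulMemClass.coe_mul, h2]
        rw [← mul_assoc, ih, mul_assoc, hDsU, ← mul_assoc]
end

section
/- Suppose U is unitary, A is self-adjoint, U ∈ C^1(A), and the commutation relation [A,U] = g₀U holds for some nonzero real constant g₀. Then e^{itA/g₀} U^n e^{-itA/g₀} = e^{itn} U^n for all t ∈ ℝ and n ∈ ℤ. -/
open scoped ComplexInnerProductSpace

section Aux

variable {𝓗 : Type*} [NormedAddCommGroup 𝓗] [InnerProductSpace ℂ 𝓗] [CompleteSpace 𝓗]

lemma const_of_hasDerivAt_zero {F : Type*} [NormedAddCommGroup F] [NormedSpace ℝ F]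
    {f : ℝ → F} (h : ∀ t, HasDerivAt f 0 t) (t : ℝ) : f t = f 0 := by
  apply is_const_of_fderiv_eq_zero (𝕜 := ℝ) (fun x => (h x).differentiableAt)
  intro x
  have := (h x).hasFDerivAt.fderiv
  rw [this]
  ext y
  simp

lemma aux_polar (A : 𝓗 →ₗ.[ℂ] 𝓗) (V : 𝓗 →L[ℂ] 𝓗) (c : ℂ)
    (h : ∀ φ : A.domain, ⟪A φ, V (φ : 𝓗)⟫ - ⟪(φ : 𝓗), V (A φ)⟫ = c * ⟪(φ : 𝓗), V (φ : 𝓗)⟫) :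
    ∀ φ ψ : A.domain,
      ⟪A φ, V (ψ : 𝓗)⟫ - ⟪(φ : 𝓗), V (A ψ)⟫ = c * ⟪(φ : 𝓗), V (ψ : 𝓗)⟫ := by
  set S : A.domain → A.domain → ℂ := fun φ ψ =>
    ⟪A φ, V (ψ : 𝓗)⟫ - ⟪(φ : 𝓗), V (A ψ)⟫ - c * ⟪(φ : 𝓗), V (ψ : 𝓗)⟫ with hS
  have hdiag : ∀ φ, S φ φ = 0 := fun φ => sub_eq_zero_of_eq (h φ)
  have hexp : ∀ φ ψ : A.domain, S (φ + ψ) (φ + ψ) = S φ φ + S φ ψ + S ψ φ + S ψ ψ := by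
    intro φ ψ
    simp only [hS, LinearPMap.map_add, Submodule.coe_add, map_add,
      inner_add_left, inner_add_right]
    ring
  have hexp2 : ∀ φ ψ : A.domain,
      S (φ + Complex.I • ψ) (φ + Complex.I • ψ)
        = S φ φ + Complex.I * S φ ψ - Complex.I * S ψ φ + S ψ ψ := by
    intro φ ψ
    simp only [hS, LinearPMap.map_add, LinearPMap.map_smul, Submodule.coe_add,
      Submodule.coe_smul, map_add, map_smul, inner_add_left, inner_add_right,
      inner_smul_left, inner_smul_right, Complex.conj_I, smul_eq_mul]
    linear_combination (-(inner ℂ (↑(A ψ)) (V ↑ψ) : ℂ) + inner ℂ (↑ψ : 𝓗) (V (A ψ))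
      + c * inner ℂ (↑ψ : 𝓗) (V ↑ψ)) * Complex.I_sq
  intro φ ψ
  have h1 : S φ ψ + S ψ φ = 0 := by
    have h0 := hexp φ ψ
    rw [hdiag, hdiag, hdiag] at h0
    linear_combination -h0
  have h2 : Complex.I * S φ ψ - Complex.I * S ψ φ = 0 := by
    have h0 := hexp2 φ ψ
    rw [hdiag, hdiag, hdiag] at h0
    linear_combination -h0
  have h4 : S φ ψ - S ψ φ = 0 := by
    rcases mul_eq_zero.mp (show Complex.I * (S φ ψ - S ψ φ) = 0 by linear_combination h2) with h0 | h0
    · exact absurd h0 Complex.I_ne_zero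
    · exact h0
  have h3 : S φ ψ = 0 := by linear_combination h1 / 2 + h4 / 2
  simp only [hS] at h3
  linear_combination h3

lemma aux_mem (A : 𝓗 →ₗ.[ℂ] 𝓗) (hA : IsSelfAdjoint A) (y z : 𝓗)
    (h : ∀ x : A.domain, ⟪z, (x : 𝓗)⟫ = ⟪y, A x⟫) :
    ∃ hy : y ∈ A.domain, A ⟨y, hy⟩ = z := by
  have hd := hA.dense_domain
  have hA' : A.adjoint = A := LinearPMap.isSelfAdjoint_def.mp hA
  have hy : y ∈ A.adjoint.domain := LinearPMap.mem_adjoint_domain_of_exists _ ⟨z, h⟩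
  have happ : A.adjoint ⟨y, hy⟩ = z := LinearPMap.adjoint_apply_eq hd ⟨y, hy⟩ h
  exact hA' ▸ ⟨hy, happ⟩

lemma aux_symm (A : 𝓗 →ₗ.[ℂ] 𝓗) (hA : IsSelfAdjoint A) :
    ∀ x y : A.domain, ⟪A x, (y : 𝓗)⟫ = ⟪(x : 𝓗), A y⟫ := by
  have hd := hA.dense_domain
  have hA' : A.adjoint = A := LinearPMap.isSelfAdjoint_def.mp hA
  have haF : A.adjoint.IsFormalAdjoint A := LinearPMap.adjoint_isFormalAdjoint hd
  rw [hA'] at haF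
  exact haF

lemma aux_strong (A : 𝓗 →ₗ.[ℂ] 𝓗) (hA : IsSelfAdjoint A) (V : 𝓗 →L[ℂ] 𝓗) (c : ℂ)
    (h2 : ∀ φ ψ : A.domain,
      ⟪A φ, V (ψ : 𝓗)⟫ - ⟪(φ : 𝓗), V (A ψ)⟫ = c * ⟪(φ : 𝓗), V (ψ : 𝓗)⟫) :
    ∀ ψ : A.domain, ∃ h : V (ψ : 𝓗) ∈ A.domain,
      A ⟨V (ψ : 𝓗), h⟩ = V (A ψ) + c • V (ψ : 𝓗) := by
  intro ψ
  apply aux_mem A hA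
  intro x
  have e1 : ⟪(x : 𝓗), V (A ψ) + c • V (ψ : 𝓗)⟫ = ⟪A x, V (ψ : 𝓗)⟫ := by
    rw [inner_add_right, inner_smul_right]
    linear_combination -h2 x ψ
  rw [← inner_conj_symm, e1, inner_conj_symm]

lemma aux_star (A : 𝓗 →ₗ.[ℂ] 𝓗) (V : 𝓗 →L[ℂ] 𝓗) (c : ℂ)
    (h2 : ∀ φ ψ : A.domain,
      ⟪A φ, V (ψ : 𝓗)⟫ - ⟪(φ : 𝓗), V (A ψ)⟫ = c * ⟪(φ : 𝓗), V (ψ : 𝓗)⟫) :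
    ∀ φ ψ : A.domain,
      ⟪A φ, (star V) (ψ : 𝓗)⟫ - ⟪(φ : 𝓗), (star V) (A ψ)⟫
        = (-(starRingEnd ℂ) c) * ⟪(φ : 𝓗), (star V) (ψ : 𝓗)⟫ := by
  have hVs : ∀ a b : 𝓗, ⟪V a, b⟫ = ⟪a, (star V) b⟫ := fun a b => by
    rw [ContinuousLinearMap.star_eq_adjoint, ContinuousLinearMap.adjoint_inner_right]
  intro φ ψ
  have hc := congrArg (starRingEnd ℂ) (h2 ψ φ)
  simp only [map_sub, map_mul, inner_conj_symm] at hc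
  rw [hVs (φ : 𝓗) (A ψ), hVs (A φ) (ψ : 𝓗), hVs (φ : 𝓗) (ψ : 𝓗)] at hc
  linear_combination -hc

lemma aux_comp (A : 𝓗 →ₗ.[ℂ] 𝓗) (V V' : 𝓗 →L[ℂ] 𝓗) (c c' : ℂ)
    (hV : ∀ ψ : A.domain, ∃ h : V (ψ : 𝓗) ∈ A.domain,
      A ⟨V (ψ : 𝓗), h⟩ = V (A ψ) + c • V (ψ : 𝓗))
    (hV' : ∀ ψ : A.domain, ∃ h : V' (ψ : 𝓗) ∈ A.domain,
      A ⟨V' (ψ : 𝓗), h⟩ = V' (A ψ) + c' • V' (ψ : 𝓗)) :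
    ∀ ψ : A.domain, ∃ h : V (V' (ψ : 𝓗)) ∈ A.domain,
      A ⟨V (V' (ψ : 𝓗)), h⟩ = V (V' (A ψ)) + (c + c') • V (V' (ψ : 𝓗)) := by
  intro ψ
  obtain ⟨h1, e1⟩ := hV' ψ
  obtain ⟨h2, e2⟩ := hV ⟨V' (ψ : 𝓗), h1⟩
  refine ⟨h2, ?_⟩
  rw [e2, e1, map_add, map_smul]
  module

lemma aux_pow (A : 𝓗 →ₗ.[ℂ] 𝓗) (V : 𝓗 →L[ℂ] 𝓗) (c : ℂ)
    (h : ∀ ψ : A.domain, ∃ h : V (ψ : 𝓗) ∈ A.domain,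
      A ⟨V (ψ : 𝓗), h⟩ = V (A ψ) + c • V (ψ : 𝓗)) :
    ∀ (m : ℕ) (ψ : A.domain), ∃ hm : (V ^ m) (ψ : 𝓗) ∈ A.domain,
      A ⟨(V ^ m) (ψ : 𝓗), hm⟩ = (V ^ m) (A ψ) + ((m : ℂ) * c) • (V ^ m) (ψ : 𝓗) := by
  intro m
  induction m with
  | zero =>
    intro ψ
    simp only [pow_zero, ContinuousLinearMap.one_apply, Nat.cast_zero, zero_mul, zero_smul,
      add_zero]
    exact ⟨ψ.2, trivial⟩
  | succ k ih =>
    intro ψ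
    have hcomp := aux_comp A (V ^ k) V ((k : ℂ) * c) c (fun ψ' => ih ψ') h ψ
    obtain ⟨hm, em⟩ := hcomp
    have hfun : (V ^ (k + 1)) (ψ : 𝓗) = (V ^ k) (V (ψ : 𝓗)) := by
      rw [pow_succ, ContinuousLinearMap.mul_apply]
    refine ⟨hfun ▸ hm, ?_⟩
    have hsub : (⟨(V ^ (k + 1)) (ψ : 𝓗), hfun ▸ hm⟩ : A.domain)
        = ⟨(V ^ k) (V (ψ : 𝓗)), hm⟩ := Subtype.ext hfun
    rw [hsub, em]
    simp only [pow_succ, ContinuousLinearMap.mul_apply, Nat.cast_add, Nat.cast_one]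
    first
    | rfl
    | (congr 1; rw [add_mul, one_mul])
    | (rw [add_mul, one_mul])

lemma aux_Wstar (W : ℝ → 𝓗 →L[ℂ] 𝓗) (hW0 : W 0 = 1)
    (hWgrp : ∀ s t : ℝ, W (s + t) = W s * W t)
    (hWu : ∀ t : ℝ, W t ∈ unitary (𝓗 →L[ℂ] 𝓗)) (t : ℝ) :
    star (W t) = W (-t) := by
  have h1 : star (W t) * W t = 1 := (Unitary.mem_iff.mp (hWu t)).1
  have h2 : W t * W (-t) = 1 := by rw [← hWgrp t (-t), add_neg_cancel, hW0]
  calc star (W t) = star (W t) * (W t * W (-t)) := by rw [h2, mul_one]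
    _ = star (W t) * W t * W (-t) := by rw [mul_assoc]
    _ = W (-t) := by rw [h1, one_mul]

lemma aux_Winner (W : ℝ → 𝓗 →L[ℂ] 𝓗) (hW0 : W 0 = 1)
    (hWgrp : ∀ s t : ℝ, W (s + t) = W s * W t)
    (hWu : ∀ t : ℝ, W t ∈ unitary (𝓗 →L[ℂ] 𝓗)) (s : ℝ) (x y : 𝓗) :
    ⟪W s x, y⟫ = ⟪x, W (-s) y⟫ := by
  rw [show W (-s) = star (W s) from (aux_Wstar W hW0 hWgrp hWu s).symm,
    ContinuousLinearMap.star_eq_adjoint, ContinuousLinearMap.adjoint_inner_right]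

lemma aux_Wneg_deriv (A : 𝓗 →ₗ.[ℂ] 𝓗) (g₀ : ℝ) (W : ℝ → 𝓗 →L[ℂ] 𝓗)
    (hWgen : ∀ (φ : A.domain) (t : ℝ),
      HasDerivAt (fun s : ℝ => W s (φ : 𝓗)) ((Complex.I * (g₀ : ℂ)⁻¹) • W t (A φ)) t)
    (η : A.domain) (s : ℝ) :
    HasDerivAt (fun s : ℝ => W (-s) (η : 𝓗))
      ((-1 : ℝ) • ((Complex.I * (g₀ : ℂ)⁻¹) • W (-s) (A η))) s :=
  (hWgen η (-s)).scomp s (hasDerivAt_neg s)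

lemma aux_W (A : 𝓗 →ₗ.[ℂ] 𝓗) (hA : IsSelfAdjoint A) (g₀ : ℝ)
    (W : ℝ → 𝓗 →L[ℂ] 𝓗) (hW0 : W 0 = 1)
    (hWgrp : ∀ s t : ℝ, W (s + t) = W s * W t)
    (hWu : ∀ t : ℝ, W t ∈ unitary (𝓗 →L[ℂ] 𝓗))
    (hWgen : ∀ (φ : A.domain) (t : ℝ),
      HasDerivAt (fun s : ℝ => W s (φ : 𝓗)) ((Complex.I * (g₀ : ℂ)⁻¹) • W t (A φ)) t) :
    ∀ (ψ : A.domain) (t : ℝ), ∃ h : W t (ψ : 𝓗) ∈ A.domain,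
      A ⟨W t (ψ : 𝓗), h⟩ = W t (A ψ) := by
  intro ψ t
  apply aux_mem A hA
  intro η
  have hD : ∀ s, HasDerivAt
      (fun s => (⟪(A η : 𝓗), W s (ψ : 𝓗)⟫ - ⟪W (-s) (η : 𝓗), (A ψ : 𝓗)⟫ : ℂ)) 0 s := by
    intro s
    have h1 := (hasDerivAt_const (𝕜 := ℝ) s ((A η : 𝓗))).inner ℂ (hWgen ψ s)
    have h2 := (aux_Wneg_deriv A g₀ W hWgen η s).inner ℂ (hasDerivAt_const (𝕜 := ℝ) s ((A ψ : 𝓗)))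
    have h3 := h1.sub h2
    convert h3 using 1
    · rfl
    · rfl
    have hadj : ⟪W (-s) ((A η : 𝓗)), (A ψ : 𝓗)⟫ = ⟪(A η : 𝓗), W s (A ψ)⟫ := by
      rw [aux_Winner W hW0 hWgrp hWu (-s), neg_neg]
    simp only [inner_zero_left, inner_zero_right, inner_smul_right, neg_one_smul,
      inner_neg_left, inner_smul_left, map_mul, Complex.conj_I, ← Complex.ofReal_inv,
      Complex.conj_ofReal, hadj]
    ring
  have hconst := const_of_hasDerivAt_zero hD t
  rw [neg_zero, hW0] at hconst
  simp only [ContinuousLinearMap.one_apply] at hconst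
  have hsym := aux_symm A hA η ψ
  have ht : ⟪(A η : 𝓗), W t (ψ : 𝓗)⟫ = ⟪W (-t) (η : 𝓗), (A ψ : 𝓗)⟫ := by
    linear_combination hconst + hsym
  have ht2 : ⟪(η : 𝓗), W t (A ψ)⟫ = ⟪A η, W t (ψ : 𝓗)⟫ := by
    have h5 := aux_Winner W hW0 hWgrp hWu (-t) (η : 𝓗) ((A ψ : 𝓗))
    rw [neg_neg] at h5
    rw [ht, h5]
  rw [← inner_conj_symm, ht2, inner_conj_symm]

end Aux

/-- Suppose `U` is unitary, `A` is self-adjoint, `U ∈ C¹(A)`, and the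
canonical commutation relation `[A,U] = g₀ U` holds for some `g₀ ∈ ℝ \ {0}`.  Then, with
`W t = e^{itA/g₀}` the unitary one-parameter group generated by `A/g₀`, one has
`e^{itA/g₀} U^n e^{-itA/g₀} = e^{itn} U^n` for all `t ∈ ℝ` and `n ∈ ℤ`. -/
theorem stmt10 {𝓗 : Type*} [NormedAddCommGroup 𝓗] [InnerProductSpace ℂ 𝓗] [CompleteSpace 𝓗]
    (U : 𝓗 →L[ℂ] 𝓗) (hU : U ∈ unitary (𝓗 →L[ℂ] 𝓗))
    (A : 𝓗 →ₗ.[ℂ] 𝓗) (hA : IsSelfAdjoint A)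
    (g₀ : ℝ) (hg₀ : g₀ ≠ 0)
    (hB : ∀ φ : A.domain,
      ⟪A φ, U (φ : 𝓗)⟫ - ⟪(φ : 𝓗), U (A φ)⟫ = ⟪(φ : 𝓗), ((g₀ : ℂ) • U) (φ : 𝓗)⟫)
    (W : ℝ → 𝓗 →L[ℂ] 𝓗)
    (hW0 : W 0 = 1) (hWgrp : ∀ s t : ℝ, W (s + t) = W s * W t)
    (hWu : ∀ t : ℝ, W t ∈ unitary (𝓗 →L[ℂ] 𝓗))
    (hWgen : ∀ (φ : A.domain) (t : ℝ),
      HasDerivAt (fun s : ℝ => W s (φ : 𝓗)) ((Complex.I * (g₀ : ℂ)⁻¹) • W t (A φ)) t) :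
    ∀ (t : ℝ) (n : ℤ),
      W t * ((((⟨U, hU⟩ : unitary (𝓗 →L[ℂ] 𝓗)) ^ n : unitary (𝓗 →L[ℂ] 𝓗))) : 𝓗 →L[ℂ] 𝓗)
          * W (-t) =
        Complex.exp (Complex.I * t * n) •
          ((((⟨U, hU⟩ : unitary (𝓗 →L[ℂ] 𝓗)) ^ n : unitary (𝓗 →L[ℂ] 𝓗))) : 𝓗 →L[ℂ] 𝓗) := by
  intro t n
  have hd : Dense (A.domain : Set 𝓗) := hA.dense_domain
  set u : unitary (𝓗 →L[ℂ] 𝓗) := ⟨U, hU⟩ with hu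
  set V : 𝓗 →L[ℂ] 𝓗 := ((u ^ n : unitary (𝓗 →L[ℂ] 𝓗)) : 𝓗 →L[ℂ] 𝓗) with hV
  -- polarized commutation relation
  have hB' : ∀ φ : A.domain,
      ⟪A φ, U (φ : 𝓗)⟫ - ⟪(φ : 𝓗), U (A φ)⟫ = (g₀ : ℂ) * ⟪(φ : 𝓗), U (φ : 𝓗)⟫ := by
    intro φ
    have h0 := hB φ
    rwa [ContinuousLinearMap.smul_apply, inner_smul_right] at h0
  have hB2 := aux_polar A U (g₀ : ℂ) hB'
  have hU1 := aux_strong A hA U (g₀ : ℂ) hB2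
  have hBstar := aux_star A U (g₀ : ℂ) hB2
  have hBstar' : ∀ φ ψ : A.domain,
      ⟪A φ, (star U) (ψ : 𝓗)⟫ - ⟪(φ : 𝓗), (star U) (A ψ)⟫
        = (-(g₀ : ℂ)) * ⟪(φ : 𝓗), (star U) (ψ : 𝓗)⟫ := by
    intro φ ψ
    have := hBstar φ ψ
    rwa [Complex.conj_ofReal] at this
  have hUstar := aux_strong A hA (star U) (-(g₀ : ℂ)) hBstar'
  have hpow := aux_pow A U (g₀ : ℂ) hU1
  have hpowstar := aux_pow A (star U) (-(g₀ : ℂ)) hUstar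
  -- commutation for V = U^n, n : ℤ
  have hVc : ∀ ψ : A.domain, ∃ h : V (ψ : 𝓗) ∈ A.domain,
      A ⟨V (ψ : 𝓗), h⟩ = V (A ψ) + ((n : ℂ) * (g₀ : ℂ)) • V (ψ : 𝓗) := by
    cases n with
    | ofNat m =>
      have hVeq : V = U ^ m := by
        rw [hV, Int.ofNat_eq_coe, zpow_natCast]
        exact SubmonoidClass.coe_pow u m
      intro ψ
      obtain ⟨h, e⟩ := hpow m ψ
      rw [hVeq]
      refine ⟨h, ?_⟩
      rw [e, show ((Int.ofNat m : ℂ) * (g₀ : ℂ)) = ((m : ℕ) : ℂ) * (g₀ : ℂ) by push_cast [Int.ofNat_eq_coe]; ring]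
    | negSucc m =>
      have hVeq : V = (star U) ^ (m + 1) := by
        rw [hV, zpow_negSucc, ← Unitary.star_eq_inv]
        rw [show ((star (u ^ (m + 1)) : unitary (𝓗 →L[ℂ] 𝓗)) : 𝓗 →L[ℂ] 𝓗)
            = star ((u ^ (m + 1) : unitary (𝓗 →L[ℂ] 𝓗)) : 𝓗 →L[ℂ] 𝓗) from rfl]
        rw [SubmonoidClass.coe_pow u (m + 1), star_pow]
      intro ψ
      obtain ⟨h, e⟩ := hpowstar (m + 1) ψ
      rw [hVeq]
      refine ⟨h, ?_⟩
      rw [e, show (((m + 1 : ℕ) : ℂ) * (-(g₀ : ℂ))) = ((Int.negSucc m : ℂ) * (g₀ : ℂ)) by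
        rw [Int.cast_negSucc]; push_cast; ring]
  have hVweak : ∀ ξ η : A.domain,
      ⟪A ξ, V (η : 𝓗)⟫ - ⟪(ξ : 𝓗), V (A η)⟫ = ((n : ℂ) * (g₀ : ℂ)) * ⟪(ξ : 𝓗), V (η : 𝓗)⟫ := by
    intro ξ η
    obtain ⟨h, e⟩ := hVc η
    have h1 : ⟪A ξ, V (η : 𝓗)⟫ = ⟪(ξ : 𝓗), A ⟨V (η : 𝓗), h⟩⟫ := aux_symm A hA ξ ⟨V (η : 𝓗), h⟩
    rw [h1, e, inner_add_right, inner_smul_right]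
    ring
  -- the ODE argument
  have key : ∀ (χ ψ : A.domain),
      ⟪(χ : 𝓗), (W t * V * W (-t)) (ψ : 𝓗)⟫
        = ⟪(χ : 𝓗), (Complex.exp (Complex.I * t * n) • V) (ψ : 𝓗)⟫ := by
    intro χ ψ
    set F : ℝ → ℂ := fun s => ⟪W (-s) (χ : 𝓗), V (W (-s) (ψ : 𝓗))⟫ with hF
    have hF' : ∀ s, HasDerivAt F ((Complex.I * (n : ℂ)) * F s) s := by
      intro s
      have hfχ := aux_Wneg_deriv A g₀ W hWgen χ s
      have hfψ := aux_Wneg_deriv A g₀ W hWgen ψ s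
      have hgψ := ((V.restrictScalars ℝ).hasFDerivAt (x := W (-s) (ψ : 𝓗))).comp_hasDerivAt s hfψ
      simp only [ContinuousLinearMap.coe_restrictScalars'] at hgψ
      have hFd := hfχ.inner ℂ hgψ
      convert hFd using 1
      · rfl
      · rfl
      obtain ⟨hmψ, emψ⟩ := aux_W A hA g₀ W hW0 hWgrp hWu hWgen ψ (-s)
      obtain ⟨hmχ, emχ⟩ := aux_W A hA g₀ W hW0 hWgrp hWu hWgen χ (-s)
      have hw := hVweak ⟨W (-s) (χ : 𝓗), hmχ⟩ ⟨W (-s) (ψ : 𝓗), hmψ⟩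
      rw [← emψ, ← emχ]
      simp only [neg_one_smul, map_neg, map_smul, inner_neg_left, inner_neg_right,
        inner_smul_left, inner_smul_right, map_mul, Complex.conj_I, ← Complex.ofReal_inv,
        Complex.conj_ofReal, hF]
      simp only [Function.comp_apply, Complex.ofReal_inv, Submodule.coe_mk] at hw ⊢
      have hg₀' : (g₀ : ℂ) ≠ 0 := by exact_mod_cast hg₀
      have hinv : ((g₀ : ℂ))⁻¹ * (g₀ : ℂ) = 1 := inv_mul_cancel₀ hg₀'
      linear_combination (-(Complex.I * ((g₀ : ℂ))⁻¹)) * hw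
        - (Complex.I * (n : ℂ) * (⟪W (-s) (χ : 𝓗), V (W (-s) (ψ : 𝓗))⟫ : ℂ)) * hinv
    have hΦ : ∀ s, HasDerivAt
        (fun s : ℝ => Complex.exp (-(Complex.I * (n : ℂ)) * (s : ℂ)) * F s) 0 s := by
      intro s
      have h0 : HasDerivAt (fun s : ℝ => (-(Complex.I * (n : ℂ)) * (s : ℂ)))
          (-(Complex.I * (n : ℂ))) s := by
        simpa using (Complex.ofRealCLM.hasDerivAt (x := s)).const_mul (-(Complex.I * (n : ℂ)))
      have hexp := h0.cexp
      have := hexp.mul (hF' s)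
      convert this using 1
      · rfl
      · rfl
      ring
    have hconst := const_of_hasDerivAt_zero hΦ t
    have hF0 : F 0 = ⟪(χ : 𝓗), V (ψ : 𝓗)⟫ := by
      simp [hF, hW0]
    rw [hF0] at hconst
    simp only [Complex.ofReal_zero, mul_zero, Complex.exp_zero, one_mul] at hconst
    have hFt : F t = Complex.exp (Complex.I * t * n) * ⟪(χ : 𝓗), V (ψ : 𝓗)⟫ := by
      have hmul : Complex.exp (Complex.I * t * n) * Complex.exp (-(Complex.I * (n : ℂ)) * t) = 1 := by
        rw [← Complex.exp_add, show Complex.I * t * n + -(Complex.I * (n : ℂ)) * t = 0 by ring,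
          Complex.exp_zero]
      calc F t = (Complex.exp (Complex.I * t * n) * Complex.exp (-(Complex.I * (n : ℂ)) * t)) * F t := by
            rw [hmul, one_mul]
        _ = Complex.exp (Complex.I * t * n) * (Complex.exp (-(Complex.I * (n : ℂ)) * t) * F t) := by
            ring
        _ = Complex.exp (Complex.I * t * n) * ⟪(χ : 𝓗), V (ψ : 𝓗)⟫ := by rw [hconst]
    have hlhs : ⟪(χ : 𝓗), (W t * V * W (-t)) (ψ : 𝓗)⟫ = F t := by
      have h5 := aux_Winner W hW0 hWgrp hWu (-t) (χ : 𝓗) (V (W (-t) (ψ : 𝓗)))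
      rw [neg_neg] at h5
      rw [ContinuousLinearMap.mul_apply, ContinuousLinearMap.mul_apply, ← h5, hF]
    rw [hlhs, hFt, ContinuousLinearMap.smul_apply, inner_smul_right]
  -- conclude operator equality
  have hvec : ∀ ψ : A.domain,
      (W t * V * W (-t)) (ψ : 𝓗) = (Complex.exp (Complex.I * t * n) • V) (ψ : 𝓗) := by
    intro ψ
    exact hd.eq_of_inner_right ℂ (fun χ hχ => key ⟨χ, hχ⟩ ψ)
  have hfun : ⇑(W t * V * W (-t)) = ⇑(Complex.exp (Complex.I * t * n) • V) := by
    apply Continuous.ext_on hd (W t * V * W (-t)).continuous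
      (Complex.exp (Complex.I * t * n) • V).continuous
    intro x hx
    exact hvec ⟨x, hx⟩
  exact ContinuousLinearMap.ext fun x => congrFun hfun x
end

section
/- Let H and A be self-adjoint operators satisfying (H−i)^{-1} ∈ C^1(A) with the homogeneous commutation relation e^{-itA} e^{isH} e^{itA} = e^{is e^t H} for all s, t ∈ ℝ. Then H restricted to ker(H)^⊥ has no eigenvalues. -/
open scoped ComplexInnerProductSpace

private lemma expI_conj (a : ℝ) :
    (starRingEnd ℂ) (Complex.exp (Complex.I * a)) = Complex.exp (Complex.I * (-a : ℝ)) := by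
  rw [← Complex.exp_conj]
  congr 1
  simp [Complex.conj_ofReal]

/-- Let `H` and `A` be self-adjoint operators satisfying
`(H−i)⁻¹ ∈ C¹(A)` (resolvent `R`, bounded commutator `B`), whose unitary groups
`GH s = e^{isH}` and `GA t = e^{itA}` satisfy the homogeneous commutation relation
`e^{-itA} e^{isH} e^{itA} = e^{is e^t H}` for all `s, t ∈ ℝ`.  Then `H` restricted to
`ker(H)ᗮ` has no eigenvalues: any eigenvector of `H` orthogonal to `ker H` vanishes. -/
theorem stmt18 {𝓗 : Type*} [NormedAddCommGroup 𝓗] [InnerProductSpace ℂ 𝓗] [CompleteSpace 𝓗]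
    (Hop A : 𝓗 →ₗ.[ℂ] 𝓗) (hH : IsSelfAdjoint Hop) (hA : IsSelfAdjoint A)
    (R : 𝓗 →L[ℂ] 𝓗) (hR1 : ∀ ψ : 𝓗, R ψ ∈ Hop.domain)
    (hR2 : ∀ ψ : 𝓗, Hop ⟨R ψ, hR1 ψ⟩ - Complex.I • R ψ = ψ)
    (B : 𝓗 →L[ℂ] 𝓗)
    (hB : ∀ φ : A.domain, ⟪A φ, R (φ : 𝓗)⟫ - ⟪(φ : 𝓗), R (A φ)⟫ = ⟪(φ : 𝓗), B (φ : 𝓗)⟫)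
    (GH GA : ℝ → 𝓗 →L[ℂ] 𝓗)
    (hGH0 : GH 0 = 1) (hGHgrp : ∀ s t : ℝ, GH (s + t) = GH s * GH t)
    (hGHu : ∀ t : ℝ, GH t ∈ unitary (𝓗 →L[ℂ] 𝓗))
    (hGHgen : ∀ (φ : Hop.domain) (t : ℝ),
      HasDerivAt (fun s : ℝ => GH s (φ : 𝓗)) (Complex.I • GH t (Hop φ)) t)
    (hGA0 : GA 0 = 1) (hGAgrp : ∀ s t : ℝ, GA (s + t) = GA s * GA t)
    (hGAu : ∀ t : ℝ, GA t ∈ unitary (𝓗 →L[ℂ] 𝓗))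
    (hGAgen : ∀ (φ : A.domain) (t : ℝ),
      HasDerivAt (fun s : ℝ => GA s (φ : 𝓗)) (Complex.I • GA t (A φ)) t)
    (hcomm : ∀ s t : ℝ, GA (-t) * GH s * GA t = GH (s * Real.exp t)) :
    ∀ (ψ : Hop.domain) (μ : ℝ), Hop ψ = (μ : ℂ) • (ψ : 𝓗) →
      (∀ χ : Hop.domain, Hop χ = 0 → ⟪(χ : 𝓗), (ψ : 𝓗)⟫ = 0) → (ψ : 𝓗) = 0 := by
  intro ψ μ heig hortho
  by_cases hμ : μ = 0
  · -- μ = 0 : ψ ∈ ker H, use orthogonality to kernel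
    have h0 : Hop ψ = 0 := by rw [heig, hμ]; simp
    have := hortho ψ h0
    rwa [inner_self_eq_zero] at this
  -- μ ≠ 0
  -- Step 1: GH s ψ = e^{i μ s} ψ
  have hGHeig : ∀ s : ℝ, GH s (ψ : 𝓗) = Complex.exp (Complex.I * (μ * s : ℝ)) • (ψ : 𝓗) := by
    have hconst : ∀ s : ℝ,
        Complex.exp (Complex.I * (-(μ * s) : ℝ)) • GH s (ψ : 𝓗) = (ψ : 𝓗) := by
      have hder : ∀ s : ℝ, HasDerivAt
          (fun s : ℝ => Complex.exp (Complex.I * (-(μ * s) : ℝ)) • GH s (ψ : 𝓗)) 0 s := by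
        intro s
        have hc : HasDerivAt (fun s : ℝ => Complex.exp (Complex.I * (-(μ * s) : ℝ)))
            ((-(Complex.I * μ)) * Complex.exp (Complex.I * (-(μ * s) : ℝ))) s := by
          have h1 : HasDerivAt (fun z : ℂ => Complex.exp ((-(Complex.I * μ)) * z))
              ((-(Complex.I * μ)) * Complex.exp ((-(Complex.I * μ)) * s)) (s : ℂ) := by
            simpa [mul_comm] using ((hasDerivAt_id (s : ℂ)).const_mul (-(Complex.I * μ))).cexp
          have h2 := h1.comp_ofReal
          have heq : (fun s : ℝ => Complex.exp ((-(Complex.I * μ)) * (s : ℂ)))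
              = fun s : ℝ => Complex.exp (Complex.I * (-(μ * s) : ℝ)) := by
            funext x; congr 1; push_cast; ring
          rw [heq] at h2
          have heq2 : (-(Complex.I * μ)) * Complex.exp ((-(Complex.I * μ)) * (s : ℂ))
              = (-(Complex.I * μ)) * Complex.exp (Complex.I * (-(μ * s) : ℝ)) := by
            congr 1; congr 1; push_cast; ring
          rwa [heq2] at h2
        have hf : HasDerivAt (fun s : ℝ => GH s (ψ : 𝓗))
            ((Complex.I * μ) • GH s (ψ : 𝓗)) s := by
          have h := hGHgen ψ s
          rw [heig] at h
          simp only [map_smul] at h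
          rw [smul_smul] at h
          exact h
        have := hc.smul hf
        convert this using 1
        · rfl
        rw [smul_smul]
        rw [← add_smul]
        convert (zero_smul ℂ _).symm using 2
        ring
      have hdiff : Differentiable ℝ
          (fun s : ℝ => Complex.exp (Complex.I * (-(μ * s) : ℝ)) • GH s (ψ : 𝓗)) :=
        fun s => (hder s).differentiableAt
      intro s
      have := is_const_of_deriv_eq_zero hdiff (fun s => (hder s).deriv) s 0
      simpa [hGH0] using this
    intro s
    have h := hconst s
    have := congrArg (fun x => Complex.exp (Complex.I * (μ * s : ℝ)) • x) h
    simp only [smul_smul, ← Complex.exp_add] at this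
    rw [show Complex.I * ((μ * s : ℝ) : ℂ) + Complex.I * ((-(μ * s) : ℝ) : ℂ) = 0 by
      push_cast; ring, Complex.exp_zero, one_smul] at this
    exact this
  -- Step 2: GH s (GA t ψ) = e^{i μ s e^t} (GA t ψ)
  have hGAeig : ∀ s t : ℝ, GH s (GA t (ψ : 𝓗))
      = Complex.exp (Complex.I * (μ * (s * Real.exp t) : ℝ)) • GA t (ψ : 𝓗) := by
    intro s t
    have h1 : GH s * GA t = GA t * GH (s * Real.exp t) := by
      have h2 := congrArg (fun X => GA t * X) (hcomm s t)
      simp only [← mul_assoc] at h2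
      rw [← hGAgrp t (-t)] at h2
      simpa [hGA0] using h2
    have h3 := congrArg (fun X : 𝓗 →L[ℂ] 𝓗 => X (ψ : 𝓗)) h1
    simp only [ContinuousLinearMap.mul_apply] at h3
    rw [hGHeig (s * Real.exp t), map_smul] at h3
    exact h3
  -- Step 3: for t ≠ 0, GA t ψ ⟂ ψ
  have horth : ∀ t : ℝ, t ≠ 0 → ⟪GA t (ψ : 𝓗), (ψ : 𝓗)⟫ = 0 := by
    intro t ht
    have hexp : Real.exp t ≠ 1 := fun h => ht (by
      have : Real.exp t = Real.exp 0 := by rw [h, Real.exp_zero]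
      exact Real.exp_eq_exp.mp this)
    have hden : μ * (1 - Real.exp t) ≠ 0 :=
      mul_ne_zero hμ (sub_ne_zero.mpr (fun h => hexp h.symm))
    set s : ℝ := Real.pi / (μ * (1 - Real.exp t)) with hs
    have key : ⟪GA t (ψ : 𝓗), (ψ : 𝓗)⟫
        = ⟪GH s (GA t (ψ : 𝓗)), GH s (ψ : 𝓗)⟫ :=
      (ContinuousLinearMap.inner_map_map_of_mem_unitary (hGHu s) _ _).symm
    rw [hGAeig s t, hGHeig s, inner_smul_left, inner_smul_right, expI_conj,
      ← mul_assoc, ← Complex.exp_add] at key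
    have hreal : μ * s - μ * (s * Real.exp t) = Real.pi := by
      have h2 : s * (μ * (1 - Real.exp t)) = Real.pi := div_mul_cancel₀ _ hden
      linear_combination h2
    have hC : (μ : ℂ) * s - (μ : ℂ) * ((s : ℂ) * (Real.exp t : ℂ)) = (Real.pi : ℂ) := by
      exact_mod_cast hreal
    have harg : Complex.I * ((-(μ * (s * Real.exp t)) : ℝ) : ℂ)
        + Complex.I * ((μ * s : ℝ) : ℂ) = Real.pi * Complex.I := by
      push_cast
      push_cast at hC
      linear_combination Complex.I * hC
    rw [harg, Complex.exp_pi_mul_I] at key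
    linear_combination (1 / 2 : ℂ) * key
  -- Step 4: density of A.domain + continuity kills ψ
  have hdense : Dense (A.domain : Set 𝓗) := hA.dense_domain
  by_contra hne
  have hnorm : 0 < ‖(ψ : 𝓗)‖ := norm_pos_iff.mpr hne
  have hkey : ∀ ε : ℝ, 0 < ε → ‖(ψ : 𝓗)‖ ^ 2 ≤ 2 * ε * ‖(ψ : 𝓗)‖ := by
    intro ε hε
    obtain ⟨y, hy, hdist⟩ := hdense.exists_dist_lt (ψ : 𝓗) hε
    set φ : A.domain := ⟨y, hy⟩ with hφ
    have hclose : ‖(ψ : 𝓗) - (φ : 𝓗)‖ < ε := by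
      simpa [dist_eq_norm] using hdist
    set g : ℝ → ℂ := fun t => ⟪GA t (φ : 𝓗), (ψ : 𝓗)⟫ with hg
    have hgcont : Continuous g := by
      have hc : Continuous fun t : ℝ => GA t (φ : 𝓗) := by
        rw [continuous_iff_continuousAt]
        exact fun t => (hGAgen φ t).continuousAt
      exact hc.inner continuous_const
    have hbound : ∀ t : ℝ, t ≠ 0 → ‖g t‖ ≤ ε * ‖(ψ : 𝓗)‖ := by
      intro t ht
      have heq : g t = ⟪GA t ((φ : 𝓗) - (ψ : 𝓗)), (ψ : 𝓗)⟫ := by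
        rw [hg]
        simp only [map_sub, inner_sub_left, horth t ht]
        ring
      rw [heq]
      calc ‖⟪GA t ((φ : 𝓗) - (ψ : 𝓗)), (ψ : 𝓗)⟫‖
          ≤ ‖GA t ((φ : 𝓗) - (ψ : 𝓗))‖ * ‖(ψ : 𝓗)‖ := norm_inner_le_norm _ _
        _ = ‖(φ : 𝓗) - (ψ : 𝓗)‖ * ‖(ψ : 𝓗)‖ := by
            rw [ContinuousLinearMap.norm_map_of_mem_unitary (hGAu t)]
        _ ≤ ε * ‖(ψ : 𝓗)‖ := by
            apply mul_le_mul_of_nonneg_right _ (norm_nonneg _)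
            rw [norm_sub_rev]
            exact hclose.le
    have hlim : Filter.Tendsto (fun t => ‖g t‖) (nhdsWithin (0 : ℝ) {(0 : ℝ)}ᶜ)
        (nhds ‖g 0‖) :=
      ((hgcont.tendsto 0).mono_left nhdsWithin_le_nhds).norm
    have hg0 : ‖g 0‖ ≤ ε * ‖(ψ : 𝓗)‖ :=
      le_of_tendsto hlim (Filter.eventually_of_mem self_mem_nhdsWithin
        (fun t ht => hbound t ht))
    have hg0eq : g 0 = ⟪(φ : 𝓗), (ψ : 𝓗)⟫ := by simp [hg, hGA0]
    have hsq : ⟪(ψ : 𝓗), (ψ : 𝓗)⟫ = ((‖(ψ : 𝓗)‖ : ℂ)) ^ 2 :=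
      inner_self_eq_norm_sq_to_K _
    have hsplit : ⟪(ψ : 𝓗), (ψ : 𝓗)⟫ = ⟪(ψ : 𝓗) - (φ : 𝓗), (ψ : 𝓗)⟫ + g 0 := by
      rw [hg0eq, inner_sub_left]
      ring
    have : ‖(ψ : 𝓗)‖ ^ 2 ≤ ‖⟪(ψ : 𝓗) - (φ : 𝓗), (ψ : 𝓗)⟫‖ + ‖g 0‖ := by
      calc ‖(ψ : 𝓗)‖ ^ 2 = ‖((‖(ψ : 𝓗)‖ : ℂ) ^ 2)‖ := by
            rw [norm_pow, Complex.norm_real, norm_norm]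
        _ = ‖⟪(ψ : 𝓗), (ψ : 𝓗)⟫‖ := by rw [hsq]
        _ ≤ ‖⟪(ψ : 𝓗) - (φ : 𝓗), (ψ : 𝓗)⟫‖ + ‖g 0‖ := by
            rw [hsplit]; exact norm_add_le _ _
    have h1 : ‖⟪(ψ : 𝓗) - (φ : 𝓗), (ψ : 𝓗)⟫‖ ≤ ε * ‖(ψ : 𝓗)‖ :=
      le_trans (norm_inner_le_norm _ _)
        (mul_le_mul_of_nonneg_right hclose.le (norm_nonneg _))
    linarith
  have := hkey (‖(ψ : 𝓗)‖ / 4) (by linarith)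
  nlinarith
end
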